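/- Let γ > 0 and let b, K, r : ℝ → ℝ be functions with b(t) > 0, K(t) > 0, r(t) > 0, and r(t) > b(t) for all t. Define G(t, u) = b(t) − r(t)/(1 + (u/K(t))^γ), and suppose m := inf_{t} ( (r(t)/b(t) − 1) K(t)^γ ) > 1 and B := (1/γ) · sup_{t} ln( (r(t)/b(t) − 1) K(t)^γ ) < ∞. Then B > 0, and for every real x with |x| > B and every t one has x · G(t, e^x) > 0; moreover, for every real x and every t one has G(t, e^x) ≥ b(t) − r(t). -/
import Mathlib


/-- Verification of the sign conditions of the Li–Kuang lemma under condition (b1):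
with `G(t,u) = b(t) − r(t)/(1 + (u/K(t))^γ)`, if
`m := inf_t (r(t)/b(t) − 1) K(t)^γ > 1` and
`B := (1/γ)·sup_t ln((r(t)/b(t) − 1) K(t)^γ)` is finite (the sup set is bounded above),
then `B > 0`, `x·G(t, eˣ) > 0` whenever `|x| > B`, and `G(t, eˣ) ≥ b(t) − r(t)` always. -/
theorem getz_sign_conditions_b1
    (γ : ℝ) (hγ : 0 < γ)
    (b K r : ℝ → ℝ)
    (hbpos : ∀ t, 0 < b t) (hKpos : ∀ t, 0 < K t) (hrpos : ∀ t, 0 < r t)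
    (hrb : ∀ t, b t < r t)
    (hm : (1 : ℝ) < ⨅ t : ℝ, (r t / b t - 1) * K t ^ γ)
    (hbdd : BddAbove (Set.range fun t : ℝ => Real.log ((r t / b t - 1) * K t ^ γ))) :
    (0 : ℝ) < (1 / γ) * ⨆ t : ℝ, Real.log ((r t / b t - 1) * K t ^ γ) ∧
    (∀ (t x : ℝ), (1 / γ) * (⨆ s : ℝ, Real.log ((r s / b s - 1) * K s ^ γ)) < |x| →
      0 < x * (b t - r t / (1 + (Real.exp x / K t) ^ γ))) ∧
    (∀ (t x : ℝ), b t - r t ≤ b t - r t / (1 + (Real.exp x / K t) ^ γ)) := by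
  set c : ℝ → ℝ := fun t => (r t / b t - 1) * K t ^ γ with hcdef
  have hKp : ∀ t, (0:ℝ) < K t ^ γ := fun t => Real.rpow_pos_of_pos (hKpos t) γ
  have hrb1 : ∀ t, (1:ℝ) < r t / b t := fun t => (one_lt_div (hbpos t)).2 (hrb t)
  have hcpos : ∀ t, 0 < c t := fun t => mul_pos (by linarith [hrb1 t]) (hKp t)
  have hbb : BddBelow (Set.range c) := ⟨0, by rintro y ⟨t, rfl⟩; exact (hcpos t).le⟩
  have hc1 : ∀ t, 1 < c t := fun t => lt_of_lt_of_le hm (ciInf_le hbb t)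
  have hlogpos : ∀ t, 0 < Real.log (c t) := fun t => Real.log_pos (hc1 t)
  set S : ℝ := ⨆ t : ℝ, Real.log (c t) with hSdef
  have hle : ∀ t, Real.log (c t) ≤ S := fun t => le_ciSup hbdd t
  have hSpos : 0 < S := lt_of_lt_of_le (hlogpos 0) (hle 0)
  have hBpos : (0:ℝ) < (1/γ) * S := mul_pos (by positivity) hSpos
  -- rewrite (exp x / K t)^γ
  have hs : ∀ (t x : ℝ), (Real.exp x / K t) ^ γ = Real.exp (γ * x) / K t ^ γ := by
    intro t x
    rw [Real.div_rpow (Real.exp_pos x).le (hKpos t).le, ← Real.exp_mul, mul_comm]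
  have hspos : ∀ (t x : ℝ), 0 < (Real.exp x / K t) ^ γ := fun t x =>
    Real.rpow_pos_of_pos (div_pos (Real.exp_pos x) (hKpos t)) γ
  refine ⟨hBpos, ?_, ?_⟩
  · intro t x hx
    have hx0 : x ≠ 0 := by
      intro h; rw [h, abs_zero] at hx; linarith
    rcases hx0.lt_or_gt with hneg | hpos
    · -- x < 0 : G < 0
      have h1 : Real.exp (γ * x) < c t := by
        have : Real.exp (γ * x) < 1 := Real.exp_lt_one_iff.2 (by nlinarith)
        linarith [hc1 t]
      have hG : b t - r t / (1 + (Real.exp x / K t) ^ γ) < 0 := by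
        rw [hs t x]
        set s := Real.exp (γ * x) / K t ^ γ with hsd
        have hsle : s < r t / b t - 1 := by
          rw [hsd, div_lt_iff₀ (hKp t)]
          calc Real.exp (γ * x) < c t := h1
            _ = (r t / b t - 1) * K t ^ γ := rfl
        have hs1 : 0 < 1 + s := by
          have : 0 < s := div_pos (Real.exp_pos _) (hKp t)
          linarith
        have hb := hbpos t
        have h2 : (s + 1) * b t < r t := (lt_div_iff₀ hb).1 (by linarith : s + 1 < r t / b t)
        rw [sub_neg, lt_div_iff₀ hs1]
        nlinarith [h2]
      exact mul_pos_of_neg_of_neg hneg hG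
    · -- x > 0 : G > 0
      have habs : |x| = x := abs_of_pos hpos
      rw [habs] at hx
      have hγx : Real.log (c t) < γ * x := by
        have : S < γ * x := by
          have := (div_lt_iff₀' hγ).1 (by rw [div_eq_mul_inv, mul_comm]; simpa [one_div] using hx)
          linarith [this]
        linarith [hle t]
      have h1 : c t < Real.exp (γ * x) := by
        rw [← Real.exp_log (hcpos t)]
        exact Real.exp_lt_exp.2 hγx
      have hG : 0 < b t - r t / (1 + (Real.exp x / K t) ^ γ) := by
        rw [hs t x]
        set s := Real.exp (γ * x) / K t ^ γ with hsd
        have hsle : r t / b t - 1 < s := by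
          rw [hsd, lt_div_iff₀ (hKp t)]
          calc (r t / b t - 1) * K t ^ γ = c t := rfl
            _ < Real.exp (γ * x) := h1
        have hs1 : 0 < 1 + s := by
          have : 0 < s := div_pos (Real.exp_pos _) (hKp t)
          linarith
        have hb := hbpos t
        have h2 : r t < (s + 1) * b t := (div_lt_iff₀ hb).1 (by linarith : r t / b t < s + 1)
        rw [sub_pos, div_lt_iff₀ hs1]
        nlinarith [h2]
      exact mul_pos hpos hG
  · intro t x
    have hs1 : (1:ℝ) ≤ 1 + (Real.exp x / K t) ^ γ := by linarith [hspos t x]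
    have := div_le_self (hrpos t).le hs1
    linarith
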